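/- Let u, v : ℝ → ℂ be Lebesgue measurable functions and [a,b] ⊂ ℝ a nonempty interval. Assume that for all x ∈ [a,b], u(t)·v(t+x) = 0 for almost every t ∈ ℝ. Then for every t₀ in the support of u (as a distribution/essential support), v(t) = 0 for almost every t ∈ [t₀+a, t₀+b]. -/

import Mathlib

open MeasureTheory Set

theorem stmt0 (u v : ℝ → ℂ) (a b : ℝ) (hab : a ≤ b)
    (hu : Measurable u) (hv : Measurable v)
    (h : ∀ x ∈ Icc a b, ∀ᵐ t : ℝ, u t * v (t + x) = 0)
    (t₀ : ℝ)
    (ht₀ : ∀ ε > 0, 0 < volume {t ∈ Ioo (t₀ - ε) (t₀ + ε) | u t ≠ 0}) :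
    ∀ᵐ t : ℝ, t ∈ Icc (t₀ + a) (t₀ + b) → v t = 0 := by
  set μ : Measure ℝ := volume.restrict (Icc a b) with hμ
  have h1 : ∀ᵐ x ∂μ, ∀ᵐ t : ℝ, u t * v (t + x) = 0 :=
    (ae_restrict_iff' measurableSet_Icc).2 (Filter.Eventually.of_forall h)
  have hmeas : MeasurableSet {z : ℝ × ℝ | u z.2 * v (z.2 + z.1) = 0} := by
    have : Measurable fun z : ℝ × ℝ => u z.2 * v (z.2 + z.1) :=
      (hu.comp measurable_snd).mul (hv.comp (measurable_snd.add measurable_fst))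
    exact this (measurableSet_singleton 0)
  have h2 : ∀ᵐ t : ℝ, ∀ᵐ x ∂μ, u t * v (t + x) = 0 :=
    (Measure.ae_ae_comm hmeas).1 h1
  -- key: a.e. t, if u t ≠ 0 then v = 0 a.e. on [t+a, t+b]
  have key : ∀ᵐ t : ℝ, u t ≠ 0 →
      ∀ᵐ s : ℝ, s ∈ Icc (t + a) (t + b) → v s = 0 := by
    filter_upwards [h2] with t ht hut
    have H : ∀ᵐ x : ℝ, x ∈ Icc a b → v (t + x) = 0 := by
      have := (ae_restrict_iff' measurableSet_Icc).1 ht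
      filter_upwards [this] with x hx hxab
      exact (mul_eq_zero.1 (hx hxab)).resolve_left hut
    have qmp := (measurePreserving_sub_right (volume : Measure ℝ) t).quasiMeasurePreserving
    have H' : ∀ᵐ s : ℝ, s - t ∈ Icc a b → v (t + (s - t)) = 0 :=
      qmp.tendsto_ae.eventually H
    filter_upwards [H'] with s hs hmem
    have : s - t ∈ Icc a b := ⟨le_sub_iff_add_le'.2 hmem.1, sub_le_iff_le_add'.2 hmem.2⟩
    simpa using hs this
  -- choose points tₙ close to t₀ where the conclusion of `key` holds
  have hchoice : ∀ n : ℕ, ∃ t : ℝ, t ∈ Ioo (t₀ - 1 / (n + 1)) (t₀ + 1 / (n + 1)) ∧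
      ∀ᵐ s : ℝ, s ∈ Icc (t + a) (t + b) → v s = 0 := by
    intro n
    have hε : (0 : ℝ) < 1 / (n + 1) := by positivity
    have hpos := ht₀ (1 / (n + 1)) hε
    -- the bad set has measure zero
    by_contra hcon
    push_neg at hcon
    have hsub : {t ∈ Ioo (t₀ - 1 / (n + 1)) (t₀ + 1 / (n + 1)) | u t ≠ 0} ⊆
        {t : ℝ | ¬ (u t ≠ 0 → ∀ᵐ s : ℝ, s ∈ Icc (t + a) (t + b) → v s = 0)} := by
      intro t ht
      intro hcontra
      exact hcon t ht.1 (by filter_upwards [hcontra ht.2] with s hs; exact fun hh => hh.2 (hs hh.1))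
    have : volume {t ∈ Ioo (t₀ - 1 / (n + 1)) (t₀ + 1 / (n + 1)) | u t ≠ 0} = 0 :=
      measure_mono_null hsub key
    exact absurd this (ne_of_gt hpos)
  choose seq hseq1 hseq2 using hchoice
  have all : ∀ᵐ s : ℝ, ∀ n : ℕ, s ∈ Icc (seq n + a) (seq n + b) → v s = 0 :=
    ae_all_iff.2 hseq2
  have ends : ∀ᵐ s : ℝ, s ≠ t₀ + a ∧ s ≠ t₀ + b := by
    have h1 : ∀ᵐ s : ℝ, s ≠ t₀ + a := by
      simp only [ae_iff, not_not]
      exact measure_singleton _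
    have h2 : ∀ᵐ s : ℝ, s ≠ t₀ + b := by
      simp only [ae_iff, not_not]
      exact measure_singleton _
    exact h1.and h2
  filter_upwards [all, ends] with s hs hends hmem
  have h1 : t₀ + a < s := lt_of_le_of_ne hmem.1 (Ne.symm hends.1)
  have h2 : s < t₀ + b := lt_of_le_of_ne hmem.2 hends.2
  obtain ⟨n, hn⟩ := exists_nat_one_div_lt
    (lt_min (sub_pos.2 h1) (sub_pos.2 h2))
  have hn1 : 1 / ((n : ℝ) + 1) < s - (t₀ + a) := hn.trans_le (min_le_left _ _)
  have hn2 : 1 / ((n : ℝ) + 1) < (t₀ + b) - s := hn.trans_le (min_le_right _ _)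
  have hseqn := hseq1 n
  refine hs n ⟨?_, ?_⟩
  · have : seq n < t₀ + 1 / (n + 1) := hseqn.2
    linarith
  · have : t₀ - 1 / (n + 1) < seq n := hseqn.1
    linarith
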